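/- Suppose ⋆ and ⋆′ are two star-products on a Poisson algebra that are both 𝔤-covariant (J_X ⋆ J_Y − J_Y ⋆ J_X = iℏ{J_X,J_Y} and likewise for ⋆′), and suppose they are related by a formal reparametrization: F ⋆′ G = Σ_r (μ(iℏ))^r B_r(F,G) where F ⋆ G = Σ_r (iℏ)^r B_r(F,G) and μ(iℏ) = iℏ + Σ_{k≥2} a_k(iℏ)^k. If there exist X, Y in 𝔤 with B_1(J_X,J_Y) − B_1(J_Y,J_X) = {J_X,J_Y} ≠ 0, then μ(iℏ) = iℏ (all a_k = 0), and hence ⋆ = ⋆′. -/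

import Mathlib

/-- Let `⋆ = Σ_r (iℏ)^r B_r` be a star-product and
`⋆′ = Σ_r (iℏ)^r B′_r` its reparametrization by a formal series
`μ(iℏ) = iℏ + Σ_{k≥2} a_k (iℏ)^k` (so `B′_r(F,G) = Σ_m coeff_r(μ^m)·B_m(F,G)`).
If both products are 𝔤-covariant, witnessed by elements `Jx`, `Jy` with
`B₁(Jx,Jy) − B₁(Jy,Jx) = {Jx,Jy} = P ≠ 0` and vanishing higher skew parts,
then `μ(iℏ) = iℏ` and hence `⋆ = ⋆′`. -/
theorem covariant_reparametrization_is_trivial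
    (S : Type*) [CommRing S] [Algebra ℂ S]
    (B B' : ℕ → S → S → S) (μ : PowerSeries ℂ)
    (hμ0 : PowerSeries.constantCoeff μ = 0)
    (hμ1 : PowerSeries.coeff 1 μ = 1)
    (hB' : ∀ (r : ℕ) (F G : S),
      B' r F G = ∑ m ∈ Finset.range (r + 1),
        PowerSeries.coeff r (μ ^ m) • B m F G)
    (hB0 : ∀ F G : S, B 0 F G = F * G)
    (Jx Jy P : S) (hP : P ≠ 0)
    (hcov1 : B 1 Jx Jy - B 1 Jy Jx = P)
    (hcovhi : ∀ r : ℕ, 2 ≤ r → B r Jx Jy - B r Jy Jx = 0)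
    (hcov1' : B' 1 Jx Jy - B' 1 Jy Jx = P)
    (hcovhi' : ∀ r : ℕ, 2 ≤ r → B' r Jx Jy - B' r Jy Jx = 0) :
    μ = PowerSeries.X ∧ ∀ r : ℕ, B' r = B r := by
  -- First show all higher coefficients of μ vanish.
  have hhi : ∀ r : ℕ, 2 ≤ r → PowerSeries.coeff r μ = 0 := by
    intro r hr
    have h := hcovhi' r hr
    rw [hB', hB', ← Finset.sum_sub_distrib] at h
    simp only [← smul_sub] at h
    have hsum : ∑ m ∈ Finset.range (r + 1),
        PowerSeries.coeff r (μ ^ m) • (B m Jx Jy - B m Jy Jx)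
        = PowerSeries.coeff r μ • P := by
      rw [Finset.sum_eq_single 1]
      · rw [pow_one, hcov1]
      · intro m hm hne
        rcases Nat.lt_or_ge m 2 with h2 | h2
        · interval_cases m
          · rw [hB0, hB0, mul_comm, sub_self, smul_zero]
          · exact absurd rfl hne
        · rw [hcovhi m h2, smul_zero]
      · intro h1
        exact absurd (Finset.mem_range.mpr (by omega)) h1
    rw [hsum] at h
    by_contra hc
    apply hP
    have : (PowerSeries.coeff r μ)⁻¹ • (PowerSeries.coeff r μ • P)
        = (PowerSeries.coeff r μ)⁻¹ • (0 : S) := by rw [h]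
    rwa [smul_smul, inv_mul_cancel₀ hc, one_smul, smul_zero] at this
  have hμX : μ = PowerSeries.X := by
    ext n
    rw [PowerSeries.coeff_X]
    rcases n with _ | _ | n
    · simpa using hμ0
    · simpa using hμ1
    · rw [hhi _ (by omega), if_neg (by omega)]
  refine ⟨hμX, ?_⟩
  intro r
  funext F G
  rw [hB', hμX]
  rw [Finset.sum_eq_single r]
  · rw [PowerSeries.coeff_X_pow, if_pos rfl, one_smul]
  · intro m hm hne
    rw [PowerSeries.coeff_X_pow, if_neg (fun h => hne h.symm), zero_smul]
  · intro h
    exact absurd (Finset.mem_range.mpr (by omega)) h
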